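/- Fix an integer n ≥ 1. The residue classes of 1, f, f², …, f^n form a basis of R/I as a ℂ-vector space; in particular R/I has dimension n+1 over ℂ. -/

import Mathlib

open Complex

/-- The ring of Laurent polynomials `ℂ[x_1^{±1},…,x_n^{±1}]`. -/
abbrev LaurentR (n : ℕ) : Type := AddMonoidAlgebra ℂ (Fin n → ℤ)

/-- The variable `x_i`. -/
noncomputable def LX (n : ℕ) (i : Fin n) : LaurentR n :=
  AddMonoidAlgebra.single (Pi.single i (1 : ℤ)) 1

/-- The monomial `(x_1⋯x_n)⁻¹`. -/
noncomputable def LXinv (n : ℕ) : LaurentR n :=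
  AddMonoidAlgebra.single (fun _ => (-1 : ℤ)) 1

/-- The mirror superpotential `f = x_1 + ⋯ + x_n + (x_1⋯x_n)⁻¹`. -/
noncomputable def Lf (n : ℕ) : LaurentR n := (∑ i, LX n i) + LXinv n

/-- The Jacobian ideal `I = (x_1·∂f/∂x_1, …, x_n·∂f/∂x_n)
  = (x_1 − (x_1⋯x_n)⁻¹, …, x_n − (x_1⋯x_n)⁻¹)`. -/
noncomputable def LI (n : ℕ) : Ideal (LaurentR n) :=
  Ideal.span (Set.range fun i : Fin n => LX n i - LXinv n)

noncomputable abbrev LQ (n : ℕ) := LaurentR n ⧸ LI n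

noncomputable def Lmk (n : ℕ) : LaurentR n →+* LQ n := Ideal.Quotient.mk (LI n)

/-- `x_i` as a unit of `R`. -/
noncomputable def LU (n : ℕ) (i : Fin n) : (LaurentR n)ˣ where
  val := AddMonoidAlgebra.single (Pi.single i 1) 1
  inv := AddMonoidAlgebra.single (-(Pi.single i 1)) 1
  val_inv := by rw [AddMonoidAlgebra.single_mul_single]; simp [AddMonoidAlgebra.one_def]
  inv_val := by rw [AddMonoidAlgebra.single_mul_single]; simp [AddMonoidAlgebra.one_def]

lemma LU_zpow (n : ℕ) (i : Fin n) (m : ℤ) :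
    ((LU n i ^ m : (LaurentR n)ˣ) : LaurentR n)
      = AddMonoidAlgebra.single (m • Pi.single i 1) 1 := by
  have h : (Units.coeHom (LaurentR n)).comp (zpowersHom (LaurentR n)ˣ (LU n i))
      = (AddMonoidAlgebra.of ℂ (Fin n → ℤ)).comp
        (AddMonoidHom.toMultiplicative (zmultiplesHom (Fin n → ℤ) (Pi.single i (1:ℤ)))) := by
    apply MonoidHom.ext_mint
    simp [LU, AddMonoidAlgebra.of_apply]
  have := DFunLike.congr_fun h (Multiplicative.ofAdd m)
  simpa [AddMonoidAlgebra.of_apply] using this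

/-- The common class of all `x_i` in `R/I`, as a unit. -/
noncomputable def Lu (n : ℕ) (hn : 0 < n) : (LQ n)ˣ :=
  Units.map (Lmk n).toMonoidHom (LU n ⟨0, hn⟩)

lemma LU_map_eq (n : ℕ) (hn : 0 < n) (i : Fin n) :
    Units.map (Lmk n).toMonoidHom (LU n i) = Lu n hn := by
  apply Units.ext
  show Lmk n ((LU n i : LaurentR n)) = Lmk n ((LU n ⟨0, hn⟩ : LaurentR n))
  refine Ideal.Quotient.eq.2 ?_
  have h1 : LX n i - LXinv n ∈ LI n := Ideal.subset_span ⟨i, rfl⟩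
  have h2 : LX n ⟨0, hn⟩ - LXinv n ∈ LI n := Ideal.subset_span ⟨⟨0, hn⟩, rfl⟩
  have := sub_mem h1 h2
  simpa [LX, LU] using this

lemma mk_single_pisingle (n : ℕ) (hn : 0 < n) (i : Fin n) (m : ℤ) :
    Lmk n (AddMonoidAlgebra.single (Pi.single i m) 1)
      = ((Lu n hn ^ m : (LQ n)ˣ) : LQ n) := by
  have h : Pi.single i m = (m • Pi.single i (1:ℤ) : Fin n → ℤ) := by
    funext j
    by_cases hj : j = i
    · subst hj; simp
    · simp [Pi.single_apply, hj]
  have hmap : ((Lu n hn ^ m : (LQ n)ˣ) : LQ n)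
      = Lmk n ((LU n i ^ m : (LaurentR n)ˣ) : LaurentR n) := by
    rw [← LU_map_eq n hn i, ← map_zpow]
    rfl
  rw [hmap, LU_zpow, h]

lemma mk_single (n : ℕ) (hn : 0 < n) (v : Fin n → ℤ) :
    Lmk n (AddMonoidAlgebra.single v 1)
      = ((Lu n hn ^ (∑ i, v i) : (LQ n)ˣ) : LQ n) := by
  classical
  have key : ∀ s : Finset (Fin n),
      Lmk n (AddMonoidAlgebra.single (∑ i ∈ s, Pi.single i (v i)) 1)
        = ((Lu n hn ^ (∑ i ∈ s, v i) : (LQ n)ˣ) : LQ n) := by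
    intro s
    induction s using Finset.induction with
    | empty => simp [← AddMonoidAlgebra.one_def]
    | @insert a s ha ih =>
        rw [Finset.sum_insert ha, Finset.sum_insert ha]
        have hsplit : (AddMonoidAlgebra.single (Pi.single a (v a) + ∑ i ∈ s, Pi.single i (v i)) 1
            : LaurentR n)
            = AddMonoidAlgebra.single (Pi.single a (v a)) 1
              * AddMonoidAlgebra.single (∑ i ∈ s, Pi.single i (v i)) 1 := by
          rw [AddMonoidAlgebra.single_mul_single, one_mul]
        rw [hsplit, map_mul, ih, mk_single_pisingle n hn, zpow_add, Units.val_mul]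
  have hv : v = ∑ i, Pi.single i (v i) := (Finset.univ_sum_single v).symm
  calc Lmk n (AddMonoidAlgebra.single v 1)
      = Lmk n (AddMonoidAlgebra.single (∑ i, Pi.single i (v i)) 1) := by rw [← hv]
    _ = _ := key Finset.univ

lemma Lu_pow (n : ℕ) (hn : 0 < n) : Lu n hn ^ ((n : ℤ) + 1) = 1 := by
  have h1 : Lmk n (LXinv n) = ((Lu n hn ^ (∑ _i : Fin n, (-1 : ℤ)) : (LQ n)ˣ) : LQ n) :=
    mk_single n hn _
  have h2 : Lmk n (LX n ⟨0, hn⟩) = ((Lu n hn ^ (1 : ℤ) : (LQ n)ˣ) : LQ n) := by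
    simpa [LX] using mk_single_pisingle n hn ⟨0, hn⟩ 1
  have h3 : Lmk n (LX n ⟨0, hn⟩) = Lmk n (LXinv n) :=
    Ideal.Quotient.eq.2 (Ideal.subset_span ⟨⟨0, hn⟩, rfl⟩)
  have hsum : (∑ _i : Fin n, (-1 : ℤ)) = -(n : ℤ) := by simp
  rw [hsum] at h1
  have hu : Lu n hn ^ (1 : ℤ) = Lu n hn ^ (-(n : ℤ)) := by
    apply Units.ext
    rw [← h2, h3, h1]
  calc Lu n hn ^ ((n : ℤ) + 1)
      = Lu n hn ^ (n : ℤ) * Lu n hn ^ (1 : ℤ) := by rw [← zpow_add]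
    _ = Lu n hn ^ (n : ℤ) * Lu n hn ^ (-(n : ℤ)) := by rw [hu]
    _ = 1 := by rw [← zpow_add]; simp

lemma Lu_zpow_congr (n : ℕ) (hn : 0 < n) {j k : ℤ}
    (h : ((j : ZMod (n+1)) : ZMod (n+1)) = (k : ZMod (n+1))) :
    Lu n hn ^ j = Lu n hn ^ k := by
  have hd : ((n+1 : ℕ) : ℤ) ∣ j - k := by
    rw [← ZMod.intCast_zmod_eq_zero_iff_dvd, Int.cast_sub, sub_eq_zero]
    exact h
  obtain ⟨t, ht⟩ := hd
  have hjk : j = k + ((n : ℤ) + 1) * t := by push_cast at ht; linarith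
  rw [hjk, zpow_add, zpow_mul, Lu_pow n hn, one_zpow, mul_one]

/-- The monoid homomorphism `Multiplicative (ZMod (n+1)) →* R/I`, `a ↦ u^a`. -/
noncomputable def LF (n : ℕ) (hn : 0 < n) : Multiplicative (ZMod (n+1)) →* LQ n where
  toFun a := ((Lu n hn ^ ((Multiplicative.toAdd a).val : ℤ) : (LQ n)ˣ) : LQ n)
  map_one' := by simp
  map_mul' a b := by
    show ((Lu n hn ^ ((Multiplicative.toAdd (a * b)).val : ℤ) : (LQ n)ˣ) : LQ n)
        = ((Lu n hn ^ ((Multiplicative.toAdd a).val : ℤ) : (LQ n)ˣ) : LQ n)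
          * ((Lu n hn ^ ((Multiplicative.toAdd b).val : ℤ) : (LQ n)ˣ) : LQ n)
    rw [← Units.val_mul, ← zpow_add]
    refine congrArg Units.val (Lu_zpow_congr n hn ?_)
    push_cast
    simp [ZMod.natCast_val, ZMod.cast_id, toAdd_mul]

/-- `ψ : ℂ[ZMod (n+1)] →ₐ R/I`. -/
noncomputable def Lpsi (n : ℕ) (hn : 0 < n) :
    AddMonoidAlgebra ℂ (ZMod (n+1)) →ₐ[ℂ] LQ n :=
  AddMonoidAlgebra.lift ℂ (LQ n) (ZMod (n+1)) (LF n hn)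

/-- Exponent-sum map. -/
noncomputable def Ls (n : ℕ) : (Fin n → ℤ) →+ ZMod (n+1) where
  toFun v := ∑ i, ((v i : ℤ) : ZMod (n+1))
  map_zero' := by simp
  map_add' v w := by
    simp only [Pi.add_apply]
    push_cast
    rw [Finset.sum_add_distrib]

/-- `φ : R →ₐ ℂ[ZMod (n+1)]`. -/
noncomputable def Lphi (n : ℕ) :
    LaurentR n →ₐ[ℂ] AddMonoidAlgebra ℂ (ZMod (n+1)) :=
  AddMonoidAlgebra.mapDomainAlgHom ℂ ℂ (Ls n)

lemma Lphi_single (n : ℕ) (v : Fin n → ℤ) (c : ℂ) :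
    Lphi n (AddMonoidAlgebra.single v c)
      = AddMonoidAlgebra.single (Ls n v) c := by
  simp [Lphi, Finsupp.mapDomain_single]

lemma Ls_single (n : ℕ) (i : Fin n) (m : ℤ) : Ls n (Pi.single i m) = (m : ZMod (n+1)) := by
  have hrfl : Ls n (Pi.single i m) = ∑ j, (((Pi.single i m : Fin n → ℤ) j : ℤ) : ZMod (n+1)) := rfl
  rw [hrfl, Finset.sum_eq_single i]
  · simp
  · intro j _ hj; simp [Pi.single_apply, hj]
  · simp

lemma Lphi_vanish (n : ℕ) : ∀ a ∈ LI n, Lphi n a = 0 := by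
  intro a ha
  have hle : LI n ≤ RingHom.ker (Lphi n) := by
    rw [LI, Ideal.span_le]
    rintro x ⟨i, rfl⟩
    simp only [SetLike.mem_coe, RingHom.mem_ker, map_sub]
    have h1 : Lphi n (LX n i) = AddMonoidAlgebra.single (1 : ZMod (n+1)) 1 := by
      rw [LX, Lphi_single, Ls_single]; norm_num
    have h2 : Lphi n (LXinv n) = AddMonoidAlgebra.single (1 : ZMod (n+1)) 1 := by
      rw [LXinv, Lphi_single]
      congr 1
      have hrfl : Ls n (fun _ => (-1 : ℤ)) = ∑ _i : Fin n, ((-1 : ℤ) : ZMod (n+1)) := rfl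
      rw [hrfl]
      simp only [Finset.sum_const, Finset.card_univ, Fintype.card_fin, Int.cast_neg,
        Int.cast_one, nsmul_eq_mul, mul_neg, mul_one]
      have : ((n : ZMod (n+1)) + 1) = 0 := by
        have := ZMod.natCast_self (n+1); push_cast at this; linear_combination this
      linear_combination -this
    rw [h1, h2, sub_self]
  exact hle ha

noncomputable def LphiBar (n : ℕ) : LQ n →ₐ[ℂ] AddMonoidAlgebra ℂ (ZMod (n+1)) :=
  Ideal.Quotient.liftₐ (LI n) (Lphi n) (Lphi_vanish n)

lemma LphiBar_mk (n : ℕ) (p : LaurentR n) : LphiBar n (Lmk n p) = Lphi n p := by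
  simp [LphiBar, Lmk, Ideal.Quotient.liftₐ_apply, Ideal.Quotient.lift_mk]; rfl

lemma Lpsi_single_one (n : ℕ) (hn : 0 < n) (a : ZMod (n+1)) :
    Lpsi n hn (AddMonoidAlgebra.single a 1)
      = ((Lu n hn ^ ((a.val : ℕ) : ℤ) : (LQ n)ˣ) : LQ n) := by
  rw [Lpsi, AddMonoidAlgebra.lift_single]
  simp [LF]

lemma comp1 (n : ℕ) (hn : 0 < n) :
    (LphiBar n).comp (Lpsi n hn) = AlgHom.id ℂ (AddMonoidAlgebra ℂ (ZMod (n+1))) := by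
  apply AddMonoidAlgebra.algHom_ext ?_ (Subsingleton.elim _ _)
  intro a
  rw [AlgHom.comp_apply, Lpsi_single_one, AlgHom.id_apply]
  have hval : ((Lu n hn ^ ((a.val : ℕ) : ℤ) : (LQ n)ˣ) : LQ n)
      = Lmk n (AddMonoidAlgebra.single (Pi.single (⟨0, hn⟩ : Fin n) ((a.val : ℕ) : ℤ)) 1) :=
    (mk_single_pisingle n hn _ _).symm
  rw [hval, LphiBar_mk, Lphi_single, Ls_single]
  congr 1
  push_cast
  simp [ZMod.natCast_val, ZMod.cast_id]

lemma comp2 (n : ℕ) (hn : 0 < n) :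
    (Lpsi n hn).comp ((LphiBar n).comp (Ideal.Quotient.mkₐ ℂ (LI n)))
      = Ideal.Quotient.mkₐ ℂ (LI n) := by
  apply AddMonoidAlgebra.algHom_ext ?_ (Subsingleton.elim _ _)
  intro v
  rw [AlgHom.comp_apply, AlgHom.comp_apply]
  have hmk : Ideal.Quotient.mkₐ ℂ (LI n) (AddMonoidAlgebra.single v 1)
      = Lmk n (AddMonoidAlgebra.single v 1) := rfl
  rw [hmk, LphiBar_mk, Lphi_single]
  have h1 : Ls n v = (((∑ i, v i : ℤ) : ZMod (n+1))) := by
    have hrfl : Ls n v = ∑ i, ((v i : ℤ) : ZMod (n+1)) := rfl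
    rw [hrfl]
    push_cast
    rfl
  rw [Lpsi_single_one, mk_single n hn]
  refine congrArg Units.val (Lu_zpow_congr n hn ?_)
  rw [h1]
  push_cast
  simp [ZMod.natCast_val, ZMod.cast_id]

/-- The linear equivalence `ℂ[ZMod (n+1)] ≃ₗ R/I`. -/
noncomputable def Lequiv (n : ℕ) (hn : 0 < n) :
    AddMonoidAlgebra ℂ (ZMod (n+1)) ≃ₗ[ℂ] LQ n :=
  LinearEquiv.ofLinear (Lpsi n hn).toLinearMap (LphiBar n).toLinearMap
    (by
      apply LinearMap.ext
      intro x
      obtain ⟨p, rfl⟩ := Ideal.Quotient.mk_surjective (I := LI n) x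
      have := DFunLike.congr_fun (comp2 n hn) p
      simpa using this)
    (by
      apply LinearMap.ext
      intro x
      have := DFunLike.congr_fun (comp1 n hn) x
      simpa using this)

lemma mk_LXinv (n : ℕ) (hn : 0 < n) :
    Lmk n (LXinv n) = ((Lu n hn ^ (1 : ℤ) : (LQ n)ˣ) : LQ n) := by
  have h3 : Lmk n (LX n ⟨0, hn⟩) = Lmk n (LXinv n) :=
    Ideal.Quotient.eq.2 (Ideal.subset_span ⟨⟨0, hn⟩, rfl⟩)
  rw [← h3, LX]
  simpa using mk_single_pisingle n hn ⟨0, hn⟩ 1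

lemma mk_Lf (n : ℕ) (hn : 0 < n) :
    Lmk n (Lf n) = ((n : ℂ) + 1) • ((Lu n hn ^ (1 : ℤ) : (LQ n)ˣ) : LQ n) := by
  have hx : ∀ i : Fin n, Lmk n (LX n i) = ((Lu n hn ^ (1 : ℤ) : (LQ n)ˣ) : LQ n) := by
    intro i
    rw [LX]
    simpa using mk_single_pisingle n hn i 1
  rw [Lf, map_add, map_sum, mk_LXinv n hn]
  simp only [hx]
  rw [Finset.sum_const, Finset.card_univ, Fintype.card_fin]
  set x := ((Lu n hn ^ (1 : ℤ) : (LQ n)ˣ) : LQ n)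
  have : ((n : ℂ) + 1) • x = (n : ℂ) • x + x := by
    rw [add_smul, one_smul]
  rw [this, Nat.cast_smul_eq_nsmul]

/-- The reindexing equivalence. -/
noncomputable def zequiv (n : ℕ) : Fin (n+1) ≃ ZMod (n+1) where
  toFun k := ((k : ℕ) : ZMod (n+1))
  invFun a := ⟨a.val, ZMod.val_lt a⟩
  left_inv k := by
    ext
    simp [ZMod.val_cast_of_lt k.isLt]
  right_inv a := by
    simp [ZMod.natCast_val, ZMod.cast_id]

/-- The residue classes of `1, f, f², …, f^n` form a `ℂ`-basis of `R/I`;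
in particular `R/I` has dimension `n+1` over `ℂ`. -/
theorem laurent_jacobian_quotient_basis (n : ℕ) (hn : 1 ≤ n) :
    (∃ b : Module.Basis (Fin (n + 1)) ℂ (LaurentR n ⧸ LI n),
      ∀ k : Fin (n + 1), b k = Ideal.Quotient.mk (LI n) (Lf n ^ (k : ℕ))) ∧
    Module.finrank ℂ (LaurentR n ⧸ LI n) = n + 1 := by
  have hn' : 0 < n := hn
  let b0 : Module.Basis (ZMod (n+1)) ℂ (AddMonoidAlgebra ℂ (ZMod (n+1))) := AddMonoidAlgebra.basis (ZMod (n+1)) ℂ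
  let b1 : Module.Basis (Fin (n+1)) ℂ (LQ n) := (b0.reindex (zequiv n).symm).map (Lequiv n hn')
  have hne : ((n : ℂ) + 1) ≠ 0 := by
    exact_mod_cast Nat.cast_add_one_ne_zero (R := ℂ) n
  let w : Fin (n+1) → ℂˣ := fun k => (Units.mk0 ((n : ℂ) + 1) hne) ^ (k : ℕ)
  let b : Module.Basis (Fin (n+1)) ℂ (LQ n) := b1.unitsSMul w
  have hb1 : ∀ k : Fin (n+1),
      b1 k = ((Lu n hn' ^ ((k : ℕ) : ℤ) : (LQ n)ˣ) : LQ n) := by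
    intro k
    have h0 : b1 k = Lequiv n hn' (b0 (zequiv n k)) := by
      simp [b1, Module.Basis.map_apply, Module.Basis.reindex_apply]
    have h1 : Lequiv n hn' (b0 (zequiv n k))
        = Lpsi n hn' (AddMonoidAlgebra.single (zequiv n k) 1) := by
      have : b0 (zequiv n k) = AddMonoidAlgebra.single (zequiv n k) (1 : ℂ) := by
        simp [b0, Finsupp.coe_basisSingleOne]
      rw [this]
      rfl
    rw [h0, h1, Lpsi_single_one]
    congr 2
    show (((((k : ℕ) : ZMod (n+1))).val : ℕ) : ℤ) = ((k : ℕ) : ℤ)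
    rw [ZMod.val_cast_of_lt k.isLt]
  have hbk : ∀ k : Fin (n+1),
      b k = Ideal.Quotient.mk (LI n) (Lf n ^ (k : ℕ)) := by
    intro k
    have hmk : Ideal.Quotient.mk (LI n) (Lf n ^ (k : ℕ)) = (Lmk n (Lf n)) ^ (k : ℕ) := by
      rw [map_pow]; rfl
    rw [hmk, mk_Lf n hn']
    rw [smul_pow]
    have hxpow : (((Lu n hn' ^ (1 : ℤ) : (LQ n)ˣ) : LQ n)) ^ (k : ℕ)
        = ((Lu n hn' ^ ((k : ℕ) : ℤ) : (LQ n)ˣ) : LQ n) := by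
      rw [← Units.val_pow_eq_pow_val, ← zpow_natCast, ← zpow_mul, one_mul]
    rw [hxpow]
    have : b k = (w k : ℂ) • b1 k := by
      rw [Module.Basis.unitsSMul_apply, Units.smul_def]
    rw [this, hb1 k]
    congr 1
  exact ⟨⟨b, hbk⟩, by rw [Module.finrank_eq_card_basis b, Fintype.card_fin]⟩
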